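/- Let q ≥ 1 and let ψ(x) = ∑_{k=0}^{q−1} c_k e^{2πikx} be a trigonometric polynomial with complex coefficients and frequencies 0, 1, ..., q−1. Then sup_{x ∈ ℝ} |ψ(x)| ≤ ∑_{k=0}^{q−1} |ψ(k/q)|. -/

import Mathlib

open Complex Real Filter

noncomputable section

attribute [local instance] Matrix.normedAddCommGroup Matrix.normedSpace

/-- 2×2 complex matrices (holomorphic extensions of real matrix maps). -/
abbrev M2 : Type := Matrix (Fin 2) (Fin 2) ℂ

/-- The horizontal strip of half-width `ε` around the real axis. -/
def Strip (ε : ℝ) : Set ℂ := {z : ℂ | |z.im| < ε}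

/-- Iterates of the cocycle: `cocycleIter α A k z = A(z+(k-1)α) ⋯ A(z)`, with value `1` for `k=0`. -/
def cocycleIter (α : ℝ) (A : ℂ → M2) : ℕ → ℂ → M2
  | 0 => fun _ => 1
  | k + 1 => fun z => A (z + (k : ℂ) * (α : ℂ)) * cocycleIter α A k z

/-- `A ∈ C^ω_ε(ℝ/ℤ, SL(2,ℝ))`: a 1-periodic holomorphic map on the strip of half-width `ε`,
real-valued on `ℝ`, with determinant 1. -/
def IsSL2Strip (ε : ℝ) (A : ℂ → M2) : Prop :=
  DifferentiableOn ℂ A (Strip ε) ∧ (∀ z : ℂ, A (z + 1) = A z) ∧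
  (∀ x : ℝ, ∀ i j, (A (x : ℝ) i j).im = 0) ∧ (∀ z ∈ Strip ε, (A z).det = 1)

/-- `B ∈ C^ω_ε(ℝ/ℤ, PSL(2,ℝ))`: a holomorphic map on the strip of half-width `ε`,
real-valued on `ℝ`, with determinant 1, which is 1-periodic up to sign. -/
def IsPSL2Strip (ε : ℝ) (B : ℂ → M2) : Prop :=
  DifferentiableOn ℂ B (Strip ε) ∧
  (∃ s : ℂ, (s = 1 ∨ s = -1) ∧ ∀ z : ℂ, B (z + 1) = s • B z) ∧
  (∀ x : ℝ, ∀ i j, (B (x : ℝ) i j).im = 0) ∧ (∀ z ∈ Strip ε, (B z).det = 1)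

/-- The rotation matrix `R_θ` (with holomorphic dependence on `θ`). -/
def Rot (θ : ℂ) : M2 :=
  !![Complex.cos (2 * π * θ), -Complex.sin (2 * π * θ);
     Complex.sin (2 * π * θ), Complex.cos (2 * π * θ)]

private lemma geom_root_sum (q : ℕ) (hq : 1 ≤ q) (j m : Fin q) :
    ∑ k : Fin q, Complex.exp (2*π*I*((j:ℂ)-(m:ℂ))/(q:ℂ)) ^ (k:ℕ)
      = if j = m then (q:ℂ) else 0 := by
  have hq0 : (q:ℂ) ≠ 0 := Nat.cast_ne_zero.2 (by omega)
  have hqZ : (0:ℤ) < q := by exact_mod_cast Nat.lt_of_lt_of_le Nat.zero_lt_one hq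
  rw [Fin.sum_univ_eq_sum_range (fun k => Complex.exp (2*π*I*((j:ℂ)-(m:ℂ))/(q:ℂ)) ^ k)]
  by_cases h : j = m
  · rw [if_pos h, h]
    have h0 : 2*(π:ℂ)*I*((m:ℂ)-(m:ℂ))/(q:ℂ) = 0 := by ring
    rw [h0, Complex.exp_zero]
    simp
  · rw [if_neg h]
    have hz1 : Complex.exp (2*π*I*((j:ℂ)-(m:ℂ))/(q:ℂ)) ≠ 1 := by
      intro he
      rw [Complex.exp_eq_one_iff] at he
      obtain ⟨n, hn⟩ := he
      have hC : ((j:ℂ) - (m:ℂ)) = n * q := by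
        have h2 : (2:ℂ)*(π:ℂ)*I ≠ 0 := by
          simp [Complex.ofReal_ne_zero, Real.pi_ne_zero, Complex.I_ne_zero]
        field_simp at hn
        apply mul_left_cancel₀ h2
        linear_combination (2*(π:ℂ)*I) * hn
      have hZ : ((j:ℤ) - (m:ℤ)) = n * q := by exact_mod_cast hC
      have hj : ((j:ℤ)) < q := by exact_mod_cast j.isLt
      have hm : ((m:ℤ)) < q := by exact_mod_cast m.isLt
      have hj0 : (0:ℤ) ≤ (j:ℤ) := by positivity
      have hm0 : (0:ℤ) ≤ (m:ℤ) := by positivity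
      have hn0 : n = 0 := by
        rcases lt_trichotomy n 0 with h' | h' | h'
        · have : n * q ≤ (-1) * q :=
            mul_le_mul_of_nonneg_right (by omega) hqZ.le
          omega
        · exact h'
        · have : (1:ℤ) * q ≤ n * q :=
            mul_le_mul_of_nonneg_right (by omega) hqZ.le
          omega
      rw [hn0, zero_mul, sub_eq_zero] at hZ
      exact h (Fin.ext (by exact_mod_cast hZ))
    rw [geom_sum_eq hz1]
    have hq1 : Complex.exp (2*π*I*((j:ℂ)-(m:ℂ))/(q:ℂ)) ^ q = 1 := by
      rw [← Complex.exp_nat_mul]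
      have : (q:ℂ) * (2*π*I*((j:ℂ)-(m:ℂ))/(q:ℂ)) = (((j:ℤ)-(m:ℤ) : ℤ) : ℂ) * (2*π*I) := by
        push_cast
        field_simp
      rw [this, Complex.exp_int_mul_two_pi_mul_I]
    rw [hq1, sub_self, zero_div]

/-- **Lagrange trigonometric interpolation bound.** If `ψ(x) = ∑_{k=0}^{q−1} c_k e^{2πikx}`
is a trigonometric polynomial with frequencies `0, …, q−1`, then
`sup_x |ψ(x)| ≤ ∑_{k=0}^{q−1} |ψ(k/q)|`. -/
theorem lagrange_interpolation_bound (q : ℕ) (hq : 1 ≤ q) (c : Fin q → ℂ) (x : ℝ) :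
    ‖∑ k : Fin q, c k * Complex.exp (2 * π * I * (k : ℂ) * (x : ℂ))‖ ≤
      ∑ k : Fin q, ‖∑ j : Fin q,
        c j * Complex.exp (2 * π * I * (j : ℂ) * (((k : ℝ) / (q : ℝ) : ℝ) : ℂ))‖ := by
  have hq0 : (q:ℂ) ≠ 0 := Nat.cast_ne_zero.2 (by omega)
  have hqR : (0:ℝ) < q := by exact_mod_cast Nat.lt_of_lt_of_le Nat.zero_lt_one hq
  have hcast : ∀ k : Fin q, (((k : ℝ) / (q : ℝ) : ℝ) : ℂ) = (k:ℂ)/(q:ℂ) := by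
    intro k; push_cast; ring
  have key :
      (∑ k : Fin q, c k * Complex.exp (2 * π * I * (k : ℂ) * (x : ℂ)))
        = (q:ℂ)⁻¹ * ∑ k : Fin q,
            (∑ j : Fin q, c j * Complex.exp (2 * π * I * (j : ℂ) * ((k:ℂ)/(q:ℂ))))
            * ∑ m : Fin q, Complex.exp (2 * π * I * (m : ℂ) * ((x:ℂ) - (k:ℂ)/(q:ℂ))) := by
    have step1 : ∀ k : Fin q,
        (∑ j : Fin q, c j * Complex.exp (2 * π * I * (j : ℂ) * ((k:ℂ)/(q:ℂ))))
          * ∑ m : Fin q, Complex.exp (2 * π * I * (m : ℂ) * ((x:ℂ) - (k:ℂ)/(q:ℂ)))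
        = ∑ j : Fin q, ∑ m : Fin q,
            c j * Complex.exp (2 * π * I * (m : ℂ) * (x:ℂ))
              * Complex.exp (2*π*I*((j:ℂ)-(m:ℂ))/(q:ℂ)) ^ (k:ℕ) := by
      intro k
      rw [Finset.sum_mul]
      refine Finset.sum_congr rfl fun j _ => ?_
      rw [Finset.mul_sum]
      refine Finset.sum_congr rfl fun m _ => ?_
      rw [← Complex.exp_nat_mul, mul_assoc (c j), ← Complex.exp_add, mul_assoc (c j), ← Complex.exp_add]
      congr 2
      field_simp
      ring
    calc (∑ k : Fin q, c k * Complex.exp (2 * π * I * (k : ℂ) * (x : ℂ)))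
        = ∑ j : Fin q, ∑ m : Fin q,
            c j * Complex.exp (2 * π * I * (m : ℂ) * (x:ℂ))
              * ((q:ℂ)⁻¹ * (if j = m then (q:ℂ) else 0)) := by
          symm
          refine Finset.sum_congr rfl fun j _ => ?_
          rw [Finset.sum_eq_single j]
          · rw [if_pos rfl, inv_mul_cancel₀ hq0, mul_one]
          · intro m _ hmj
            rw [if_neg fun hh => hmj hh.symm, mul_zero, mul_zero]
          · intro hjm; exact absurd (Finset.mem_univ j) hjm
      _ = (q:ℂ)⁻¹ * ∑ k : Fin q,
            (∑ j : Fin q, c j * Complex.exp (2 * π * I * (j : ℂ) * ((k:ℂ)/(q:ℂ))))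
            * ∑ m : Fin q, Complex.exp (2 * π * I * (m : ℂ) * ((x:ℂ) - (k:ℂ)/(q:ℂ))) := by
          symm
          rw [Finset.mul_sum]
          simp_rw [step1, Finset.mul_sum]
          rw [Finset.sum_comm]
          refine Finset.sum_congr rfl fun j _ => ?_
          rw [Finset.sum_comm]
          refine Finset.sum_congr rfl fun m _ => ?_
          simp_rw [← mul_assoc]
          rw [← Finset.mul_sum, geom_root_sum q hq j m]
          ring
  simp_rw [hcast]
  rw [key, norm_mul]
  have habsinv : ‖((q:ℂ)⁻¹)‖ = (q:ℝ)⁻¹ := by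
    rw [norm_inv]; simp
  rw [habsinv]
  have hE : ∀ k : Fin q,
      ‖∑ m : Fin q, Complex.exp (2 * π * I * (m : ℂ) * ((x:ℂ) - (k:ℂ)/(q:ℂ)))‖ ≤ q := by
    intro k
    calc ‖∑ m : Fin q, Complex.exp (2 * π * I * (m : ℂ) * ((x:ℂ) - (k:ℂ)/(q:ℂ)))‖
        ≤ ∑ m : Fin q, ‖Complex.exp (2 * π * I * (m : ℂ) * ((x:ℂ) - (k:ℂ)/(q:ℂ)))‖ :=
          norm_sum_le _ _
      _ ≤ ∑ _m : Fin q, (1:ℝ) := by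
          refine Finset.sum_le_sum fun m _ => ?_
          have hx : 2 * (π:ℂ) * I * (m:ℂ) * ((x:ℂ) - (k:ℂ)/(q:ℂ))
              = ((2 * π * (m:ℝ) * (x - (k:ℝ)/(q:ℝ)) : ℝ) : ℂ) * I := by
            push_cast; ring
          rw [hx, Complex.norm_exp_ofReal_mul_I]
      _ = q := by simp
  calc (q:ℝ)⁻¹ * ‖∑ k : Fin q,
          (∑ j : Fin q, c j * Complex.exp (2 * π * I * (j : ℂ) * ((k:ℂ)/(q:ℂ))))
          * ∑ m : Fin q, Complex.exp (2 * π * I * (m : ℂ) * ((x:ℂ) - (k:ℂ)/(q:ℂ)))‖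
      ≤ (q:ℝ)⁻¹ * ∑ k : Fin q,
          ‖∑ j : Fin q, c j * Complex.exp (2 * π * I * (j : ℂ) * ((k:ℂ)/(q:ℂ)))‖ * q := by
        refine mul_le_mul_of_nonneg_left ?_ (by positivity)
        refine le_trans (norm_sum_le _ _) (Finset.sum_le_sum fun k _ => ?_)
        rw [norm_mul]
        exact mul_le_mul_of_nonneg_left (hE k) (norm_nonneg _)
    _ = ∑ k : Fin q, ‖∑ j : Fin q, c j * Complex.exp (2 * π * I * (j : ℂ) * ((k:ℂ)/(q:ℂ)))‖ := by
        rw [← Finset.sum_mul, mul_comm, mul_assoc, mul_inv_cancel₀ (ne_of_gt hqR), mul_one]
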